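/- Suppose k_Q := ∫_M Q dμ ≠ 0 and that there exists ω₀ ∈ C(M,ℝ) such that Q_{ω₀} is a constant function with value q. Then q ≠ 0, and for every u ∈ ker P the component u₀ := (1/k_Q)·∫_M u·Q dμ of the decomposition ker P = {constants} ⊕ 𝒩(𝒬) equals the mean of u with respect to μ_{ω₀}, i.e. u₀ = (∫_M u dμ_{ω₀}) / μ_{ω₀}(M); equivalently, ∫_M (u − u₀) dμ_{ω₀} = 0. (The conformal decomposition recovers the Hodge decomposition of 𝒩(P) for a metric with constant Q-curvature.) -/

import Mathlib

open MeasureTheory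

variable {M : Type*} [TopologicalSpace M] [MeasurableSpace M]

/-- The transformed Q-curvature `Q_ω = e^{-nω}(Q + Pω)`. -/
noncomputable def Qcurv (n : ℝ) (P : C(M, ℝ) →ₗ[ℝ] C(M, ℝ)) (Q ω : C(M, ℝ)) : C(M, ℝ) :=
  ⟨fun x => Real.exp (-n * ω x) * (Q x + P ω x),
    (Real.continuous_exp.comp (continuous_const.mul ω.continuous)).mul
      (Q.continuous.add (P ω).continuous)⟩

/-- The conformally rescaled measure `μ_ω`, with density `e^{nω}` w.r.t. `μ`. -/
noncomputable def confMeasure (μ : Measure M) (n : ℝ) (ω : C(M, ℝ)) : Measure M :=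
  μ.withDensity fun x => ENNReal.ofReal (Real.exp (n * ω x))

/-- `𝒩(𝒬) = {u ∈ ker P : ∫ u·Q dμ = 0}`. -/
def NQ (μ : Measure M) (P : C(M, ℝ) →ₗ[ℝ] C(M, ℝ)) (Q : C(M, ℝ)) : Set C(M, ℝ) :=
  {u | P u = 0 ∧ ∫ x, u x * Q x ∂μ = 0}

/-- `ℱ = ⋂_ω ℱ^ω`, where `ℱ^ω` is the set of `f` not `L²(μ_ω)`-orthogonal to `𝒩(𝒬)`. -/
def Fcal (μ : Measure M) (n : ℝ) (P : C(M, ℝ) →ₗ[ℝ] C(M, ℝ)) (Q : C(M, ℝ)) : Set C(M, ℝ) :=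
  {f | ∀ ω : C(M, ℝ), ∃ u ∈ NQ μ P Q, ∫ x, f x * u x ∂(confMeasure μ n ω) ≠ 0}

variable [BorelSpace M] [CompactSpace M] [ConnectedSpace M]
variable (μ : Measure M) [IsFiniteMeasure μ] [Measure.IsOpenPosMeasure μ]
variable (n : ℝ) (P : C(M, ℝ) →ₗ[ℝ] C(M, ℝ)) (Q : C(M, ℝ))


theorem stmt14
    (hn : 0 < n)
    (hPc : ∀ c : ℝ, P (ContinuousMap.const M c) = 0)
    (hPsa : ∀ u v : C(M, ℝ), ∫ x, u x * P v x ∂μ = ∫ x, P u x * v x ∂μ)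
    (hk : (∫ x, Q x ∂μ) ≠ 0)
    (ω₀ : C(M, ℝ)) (q : ℝ) (hq : Qcurv n P Q ω₀ = ContinuousMap.const M q) :
    q ≠ 0 ∧
      ∀ u : C(M, ℝ), P u = 0 →
        (∫ x, u x * Q x ∂μ) / (∫ x, Q x ∂μ) =
            (∫ x, u x ∂(confMeasure μ n ω₀)) / ((confMeasure μ n ω₀) Set.univ).toReal ∧
          ∫ x, (u x - (∫ y, u y * Q y ∂μ) / (∫ y, Q y ∂μ)) ∂(confMeasure μ n ω₀) = 0 := by
  classical
  -- integrability of continuous functions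
  have hint : ∀ f : M → ℝ, Continuous f → Integrable f μ := fun f hf =>
    hf.integrable_of_hasCompactSupport
      (IsCompact.of_isClosed_subset isCompact_univ (isClosed_tsupport f) (Set.subset_univ _))
  have hexp : Continuous fun x => Real.exp (n * ω₀ x) :=
    Real.continuous_exp.comp (continuous_const.mul ω₀.continuous)
  -- transfer lemma
  have htrans : ∀ f : M → ℝ, Continuous f →
      ∫ x, f x ∂(confMeasure μ n ω₀) = ∫ x, Real.exp (n * ω₀ x) * f x ∂μ := by
    intro f hf
    have hmeas : Measurable fun x => (Real.exp (n * ω₀ x)).toNNReal :=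
      (hexp.measurable).real_toNNReal
    have : (fun x => ENNReal.ofReal (Real.exp (n * ω₀ x)))
        = fun x => (((Real.exp (n * ω₀ x)).toNNReal : NNReal) : ENNReal) := rfl
    rw [confMeasure, this, integral_withDensity_eq_integral_smul hmeas]
    congr 1 with x
    simp [NNReal.smul_def, Real.coe_toNNReal _ (Real.exp_nonneg _)]
  -- the pointwise identity Q + Pω₀ = q e^{nω₀}
  have hpt : ∀ x : M, Q x + P ω₀ x = q * Real.exp (n * ω₀ x) := by
    intro x
    have h1 : Real.exp (-n * ω₀ x) * (Q x + P ω₀ x) = q := by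
      have := congrFun (congrArg (fun f : C(M, ℝ) => (f : M → ℝ)) hq) x
      simpa [Qcurv] using this
    have h2 : Real.exp (n * ω₀ x) * (Real.exp (-n * ω₀ x) * (Q x + P ω₀ x))
        = Real.exp (n * ω₀ x) * q := by rw [h1]
    rw [← mul_assoc, ← Real.exp_add] at h2
    simpa [mul_comm] using h2
  -- for u with P u = 0 : ∫ u (Pω₀) dμ = 0
  have hPz : ∀ u : C(M, ℝ), P u = 0 → ∫ x, u x * P ω₀ x ∂μ = 0 := by
    intro u hu
    rw [hPsa u ω₀, hu]
    simp
  -- key : q * ∫ e^{nω₀} u dμ = ∫ u Q dμ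
  have hkey : ∀ u : C(M, ℝ), P u = 0 →
      q * ∫ x, Real.exp (n * ω₀ x) * u x ∂μ = ∫ x, u x * Q x ∂μ := by
    intro u hu
    have h1 : ∀ x, u x * Q x + u x * P ω₀ x = q * (Real.exp (n * ω₀ x) * u x) := by
      intro x
      rw [← mul_add, hpt x]; ring
    calc q * ∫ x, Real.exp (n * ω₀ x) * u x ∂μ
        = ∫ x, q * (Real.exp (n * ω₀ x) * u x) ∂μ := (integral_const_mul _ _).symm
      _ = ∫ x, (u x * Q x + u x * P ω₀ x) ∂μ := by
          congr 1 with x; exact (h1 x).symm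
      _ = (∫ x, u x * Q x ∂μ) + ∫ x, u x * P ω₀ x ∂μ := by
          exact integral_add (hint _ (u.continuous.mul Q.continuous))
            (hint _ (u.continuous.mul (P ω₀).continuous))
      _ = ∫ x, u x * Q x ∂μ := by rw [hPz u hu]; ring
  -- apply to constant 1 : q * ∫ e^{nω₀} dμ = ∫ Q dμ
  have hone : q * ∫ x, Real.exp (n * ω₀ x) ∂μ = ∫ x, Q x ∂μ := by
    have := hkey (ContinuousMap.const M 1) (hPc 1)
    simpa using this
  have hqne : q ≠ 0 := by
    intro h
    rw [h, zero_mul] at hone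
    exact hk hone.symm
  -- total mass
  have hmass : ((confMeasure μ n ω₀) Set.univ).toReal = ∫ x, Real.exp (n * ω₀ x) ∂μ := by
    have hm : (confMeasure μ n ω₀) Set.univ
        = ∫⁻ x, ENNReal.ofReal (Real.exp (n * ω₀ x)) ∂μ := by
      rw [confMeasure, withDensity_apply _ MeasurableSet.univ, setLIntegral_univ]
    rw [hm, ← integral_eq_lintegral_of_nonneg_ae
      (Filter.Eventually.of_forall fun x => (Real.exp_nonneg _))
      hexp.aestronglyMeasurable]
  have hEtot : (∫ x, Real.exp (n * ω₀ x) ∂μ) ≠ 0 := by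
    intro h
    rw [h, mul_zero] at hone
    exact hk hone.symm
  refine ⟨hqne, fun u hu => ?_⟩
  have hE : ∫ x, u x ∂(confMeasure μ n ω₀) = ∫ x, Real.exp (n * ω₀ x) * u x ∂μ :=
    htrans _ u.continuous
  set A := ∫ y, u y * Q y ∂μ with hA
  set k := ∫ y, Q y ∂μ with hkdef
  set E := ∫ x, Real.exp (n * ω₀ x) * u x ∂μ with hEdef
  set T := ∫ x, Real.exp (n * ω₀ x) ∂μ with hT
  have h1 : q * E = A := hkey u hu
  have h2 : q * T = k := hone
  have hfrac : A / k = E / T := by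
    rw [← h1, ← h2, mul_div_mul_left _ _ hqne]
  constructor
  · rw [hE, hmass, hfrac]
  · have hsub : ∫ x, (u x - A / k) ∂(confMeasure μ n ω₀)
        = ∫ x, Real.exp (n * ω₀ x) * (u x - A / k) ∂μ :=
      htrans _ (u.continuous.sub continuous_const)
    rw [hsub]
    have : ∫ x, Real.exp (n * ω₀ x) * (u x - A / k) ∂μ
        = E - (A / k) * T := by
      calc ∫ x, Real.exp (n * ω₀ x) * (u x - A / k) ∂μ
          = ∫ x, (Real.exp (n * ω₀ x) * u x - (A / k) * Real.exp (n * ω₀ x)) ∂μ := by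
            congr 1 with x; ring
        _ = E - ∫ x, (A / k) * Real.exp (n * ω₀ x) ∂μ :=
            integral_sub (hint _ (hexp.mul u.continuous))
              (hint _ (continuous_const.mul hexp))
        _ = E - (A / k) * T := by rw [integral_const_mul]
    rw [this, hfrac]
    field_simp
    ring
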